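/- For any p > 0 consider Ŵ_Reno = √(2/p) and Ŵ_CUBIC = (τ³c/(p³b))^{1/4} with τ, c, b > 0. Then there exists p* > 0 such that for all 0 < p < p*, Ŵ_CUBIC > Ŵ_Reno; moreover Ŵ_CUBIC/Ŵ_Reno = (τ³c/(4b))^{1/4}·p^{-1/4} → ∞ as p → 0⁺. -/
import Mathlib


open Filter Topology

/-- Comparison of steady-state windows: for small enough loss probability,
CUBIC's window exceeds Reno's, the ratio is `(τ³c/(4b))^{1/4} p^{-1/4}`,
and it tends to infinity as `p → 0⁺`. -/
theorem cubic_vs_reno_window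
    (τ c b : ℝ) (hτ : 0 < τ) (hc : 0 < c) (hb : 0 < b)
    (WR WC : ℝ → ℝ)
    (hWR : ∀ p : ℝ, WR p = Real.sqrt (2 / p))
    (hWC : ∀ p : ℝ, WC p = (τ ^ 3 * c / (p ^ 3 * b)) ^ ((1 : ℝ) / 4)) :
    (∃ pstar : ℝ, 0 < pstar ∧ ∀ p : ℝ, 0 < p → p < pstar → WR p < WC p) ∧
    (∀ p : ℝ, 0 < p →
      WC p / WR p = (τ ^ 3 * c / (4 * b)) ^ ((1 : ℝ) / 4) * p ^ (-(1 : ℝ) / 4)) ∧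
    Tendsto (fun p => WC p / WR p) (𝓝[>] (0 : ℝ)) atTop := by
  have hA : 0 < τ ^ 3 * c / (4 * b) := by positivity
  -- ratio formula
  have hratio : ∀ p : ℝ, 0 < p →
      WC p / WR p = (τ ^ 3 * c / (4 * b)) ^ ((1 : ℝ) / 4) * p ^ (-(1 : ℝ) / 4) := by
    intro p hp
    have hX : 0 < τ ^ 3 * c / (p ^ 3 * b) := by positivity
    have hy : (0:ℝ) < 2 / p := by positivity
    have hWRp : WR p = ((2 / p) ^ 2) ^ ((1:ℝ)/4) := by
      rw [hWR p, Real.sqrt_eq_rpow, ← Real.rpow_natCast (2/p) 2,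
        ← Real.rpow_mul hy.le]
      norm_num
    rw [hWC p, hWRp, ← Real.div_rpow hX.le (by positivity)]
    have key : τ ^ 3 * c / (p ^ 3 * b) / (2 / p) ^ 2
        = (τ ^ 3 * c / (4 * b)) * p⁻¹ := by
      field_simp
      ring
    rw [key, Real.mul_rpow hA.le (by positivity),
      ← Real.rpow_neg_one p, ← Real.rpow_mul hp.le]
    norm_num
  have hlim : Tendsto (fun p => WC p / WR p) (𝓝[>] (0 : ℝ)) atTop := by
    have h1 : Tendsto (fun p : ℝ => p⁻¹ ^ ((1:ℝ)/4)) (𝓝[>] (0:ℝ)) atTop :=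
      (tendsto_rpow_atTop (by norm_num)).comp tendsto_inv_nhdsGT_zero
    have h2 := h1.const_mul_atTop (Real.rpow_pos_of_pos hA ((1:ℝ)/4))
    refine h2.congr' ?_
    filter_upwards [self_mem_nhdsWithin] with p hp
    have hp' : (0:ℝ) < p := hp
    rw [hratio p hp', ← Real.rpow_neg_one p, ← Real.rpow_mul hp'.le]
    norm_num
  refine ⟨?_, hratio, hlim⟩
  have hev : ∀ᶠ p in 𝓝[>] (0:ℝ), 1 < WC p / WR p := hlim.eventually_gt_atTop 1
  rw [eventually_nhdsWithin_iff, Metric.eventually_nhds_iff] at hev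
  obtain ⟨ε, hε, hball⟩ := hev
  refine ⟨ε, hε, fun p hp hpε => ?_⟩
  have h1 : 1 < WC p / WR p := by
    refine hball ?_ hp
    rw [Real.dist_eq, sub_zero, abs_of_pos hp]; exact hpε
  have hWRpos : 0 < WR p := by
    rw [hWR p]; exact Real.sqrt_pos.2 (by positivity)
  calc WR p = 1 * WR p := (one_mul _).symm
    _ < (WC p / WR p) * WR p := by exact mul_lt_mul_of_pos_right h1 hWRpos
    _ = WC p := div_mul_cancel₀ _ hWRpos.ne'
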